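/- Let (X,d) be a metric space, μ a finite Borel measure on X, S ⊆ X a nonempty subset, and let γ > 1 and C > 0 be such that for all ε ∈ (0,1): μ{x ∈ X : dist(x,S) ≤ ε} ≤ C·(log(1/ε))^{-γ}. Then ∫_{{x : dist(x,S) < 1}} log(1/dist(x,S)) dμ(x) < ∞ (where the integrand is interpreted as +∞ when dist(x,S) = 0). -/

import Mathlib

open MeasureTheory Metric Set Filter

set_option maxHeartbeats 1000000 in
theorem stmt_6 (X : Type*) [MetricSpace X] [MeasurableSpace X] [BorelSpace X]
    (μ : Measure X) [IsFiniteMeasure μ] (S : Set X) (hS : S.Nonempty)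
    (γ C : ℝ) (hγ : 1 < γ) (hC : 0 < C)
    (hμ : ∀ ε : ℝ, 0 < ε → ε < 1 →
      μ {x | infDist x S ≤ ε} ≤ ENNReal.ofReal (C * (Real.log (1 / ε)) ^ (-γ))) :
    (∫⁻ x in {x | infDist x S < 1},
      (if infDist x S = 0 then (⊤ : ENNReal)
        else ENNReal.ofReal (Real.log (1 / infDist x S))) ∂μ) < ⊤ := by
  have hd_cont : Continuous fun x => infDist x S := continuous_infDist_pt S
  have hd_meas : Measurable fun x => infDist x S := hd_cont.measurable
  -- the zero set is null
  have hZ : μ {x | infDist x S = 0} = 0 := by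
    have hle : ∀ n : ℕ, μ {x | infDist x S = 0}
        ≤ ENNReal.ofReal (C * ((n : ℝ) + 1) ^ (-γ)) := by
      intro n
      have hε : (0:ℝ) < Real.exp (-((n:ℝ)+1)) := Real.exp_pos _
      have hε1 : Real.exp (-((n:ℝ)+1)) < 1 := by
        rw [Real.exp_lt_one_iff]
        have : (0:ℝ) ≤ n := n.cast_nonneg
        linarith
      have hsub : {x | infDist x S = 0} ⊆ {x | infDist x S ≤ Real.exp (-((n:ℝ)+1))} := by
        intro x hx; simp only [mem_setOf_eq] at hx ⊢; rw [hx]; exact hε.le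
      calc μ {x | infDist x S = 0} ≤ μ {x | infDist x S ≤ Real.exp (-((n:ℝ)+1))} :=
            measure_mono hsub
        _ ≤ ENNReal.ofReal (C * (Real.log (1 / Real.exp (-((n:ℝ)+1)))) ^ (-γ)) :=
            hμ _ hε hε1
        _ = ENNReal.ofReal (C * ((n:ℝ)+1) ^ (-γ)) := by
            rw [one_div, ← Real.exp_neg, Real.log_exp, neg_neg]
    have htend : Tendsto (fun n : ℕ => ENNReal.ofReal (C * ((n:ℝ)+1) ^ (-γ)))
        atTop (nhds 0) := by
      have h1 : Tendsto (fun n : ℕ => ((n:ℝ)+1)) atTop atTop :=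
        tendsto_natCast_atTop_atTop.atTop_add tendsto_const_nhds
      have h2 : Tendsto (fun n : ℕ => ((n:ℝ)+1) ^ (-γ)) atTop (nhds 0) :=
        (tendsto_rpow_neg_atTop (by linarith : 0 < γ)).comp h1
      have h3 : Tendsto (fun n : ℕ => C * ((n:ℝ)+1) ^ (-γ)) atTop (nhds 0) := by
        simpa using h2.const_mul C
      simpa [Function.comp_def] using (ENNReal.continuous_ofReal.tendsto 0).comp h3
    exact le_antisymm (ge_of_tendsto' htend hle) zero_le
  set A : Set X := {x | infDist x S < 1} with hA
  have hAmeas : MeasurableSet A := hd_meas measurableSet_Iio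
  set f : X → ℝ := fun x => Real.log (1 / infDist x S) with hf
  have hf_meas : Measurable f := (measurable_const.div hd_meas).log
  -- replace the if by ofReal ∘ f a.e.
  have hcong : (∫⁻ x in A,
      (if infDist x S = 0 then (⊤ : ENNReal)
        else ENNReal.ofReal (Real.log (1 / infDist x S))) ∂μ)
      = ∫⁻ x in A, ENNReal.ofReal (f x) ∂μ := by
    apply lintegral_congr_ae
    have : ∀ᵐ x ∂μ, infDist x S ≠ 0 := by
      rw [ae_iff]; simpa using hZ
    filter_upwards [ae_restrict_of_ae this] with x hx
    simp [hx, hf, one_div, Real.log_inv]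
  rw [hcong]
  have f_nn : 0 ≤ᵐ[μ.restrict A] f := by
    filter_upwards [ae_restrict_mem hAmeas] with x hx
    rcases eq_or_lt_of_le (infDist_nonneg : 0 ≤ infDist x S) with h0 | h0
    · simp [hf, ← h0]
    · apply Real.log_nonneg
      rw [le_div_iff₀ h0, one_mul]
      exact le_of_lt hx
  have layer := lintegral_eq_lintegral_meas_lt (μ.restrict A) f_nn hf_meas.aemeasurable
  rw [layer]
  -- bound the layer-cake integral
  have hbound : ∀ t : ℝ, 0 < t →
      (μ.restrict A) {a | t < f a} ≤ ENNReal.ofReal (C * t ^ (-γ)) := by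
    intro t ht
    have hε : (0:ℝ) < Real.exp (-t) := Real.exp_pos _
    have hε1 : Real.exp (-t) < 1 := by rw [Real.exp_lt_one_iff]; linarith
    have hsub : {a | t < f a} ⊆ {x | infDist x S ≤ Real.exp (-t)} := by
      intro x hx
      simp only [mem_setOf_eq] at hx ⊢
      rcases eq_or_lt_of_le (infDist_nonneg : 0 ≤ infDist x S) with h0 | h0
      · rw [← h0]; exact hε.le
      · have h1 : (0:ℝ) < 1 / infDist x S := by positivity
        rw [Real.lt_log_iff_exp_lt h1] at hx
        have : infDist x S < 1 / Real.exp t := by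
          rw [lt_div_iff₀ (Real.exp_pos t)]
          calc infDist x S * Real.exp t < infDist x S * (1 / infDist x S) := by
                exact mul_lt_mul_of_pos_left hx h0
            _ = 1 := by field_simp
        rw [Real.exp_neg]
        rw [← one_div]
        exact this.le
    calc (μ.restrict A) {a | t < f a} ≤ μ {a | t < f a} := Measure.restrict_apply_le _ _
      _ ≤ μ {x | infDist x S ≤ Real.exp (-t)} := measure_mono hsub
      _ ≤ ENNReal.ofReal (C * (Real.log (1 / Real.exp (-t))) ^ (-γ)) := hμ _ hε hε1
      _ = ENNReal.ofReal (C * t ^ (-γ)) := by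
          rw [one_div, ← Real.exp_neg, Real.log_exp, neg_neg]
  have hsplit : (∫⁻ t in Ioi (0:ℝ), (μ.restrict A) {a | t < f a})
      = (∫⁻ t in Ioc (0:ℝ) 1, (μ.restrict A) {a | t < f a})
        + ∫⁻ t in Ioi (1:ℝ), (μ.restrict A) {a | t < f a} := by
    rw [← Ioc_union_Ioi_eq_Ioi (by norm_num : (0:ℝ) ≤ 1),
      lintegral_union measurableSet_Ioi (Ioc_disjoint_Ioi le_rfl)]
  rw [hsplit]
  have h1 : (∫⁻ t in Ioc (0:ℝ) 1, (μ.restrict A) {a | t < f a}) ≤ μ Set.univ := by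
    calc (∫⁻ t in Ioc (0:ℝ) 1, (μ.restrict A) {a | t < f a})
        ≤ ∫⁻ _ in Ioc (0:ℝ) 1, μ Set.univ := by
          apply lintegral_mono
          intro t
          exact (Measure.restrict_apply_le _ _).trans (measure_mono (subset_univ _))
      _ = μ Set.univ * volume (Ioc (0:ℝ) 1) := setLIntegral_const _ _
      _ = μ Set.univ := by
          rw [Real.volume_Ioc, show (1:ℝ) - 0 = 1 by norm_num, ENNReal.ofReal_one, mul_one]
  have h2 : (∫⁻ t in Ioi (1:ℝ), (μ.restrict A) {a | t < f a})
      ≤ ∫⁻ t in Ioi (1:ℝ), ENNReal.ofReal (C * t ^ (-γ)) := by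
    apply setLIntegral_mono' measurableSet_Ioi
    intro t ht
    exact hbound t (lt_trans one_pos ht)
  have h3 : (∫⁻ t in Ioi (1:ℝ), ENNReal.ofReal (C * t ^ (-γ))) < ⊤ := by
    have hint : IntegrableOn (fun t : ℝ => C * t ^ (-γ)) (Ioi 1) := by
      exact (integrableOn_Ioi_rpow_of_lt (by linarith : -γ < -1) one_pos).const_mul C
    exact hint.lintegral_lt_top
  calc (∫⁻ t in Ioc (0:ℝ) 1, (μ.restrict A) {a | t < f a})
        + ∫⁻ t in Ioi (1:ℝ), (μ.restrict A) {a | t < f a}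
      ≤ μ Set.univ + ∫⁻ t in Ioi (1:ℝ), ENNReal.ofReal (C * t ^ (-γ)) :=
        add_le_add h1 h2
    _ < ⊤ := ENNReal.add_lt_top.mpr ⟨measure_lt_top μ _, h3⟩
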